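/- Let s be a sequence, G an episode, ρ ≥ 1 a window size, and t an integer. Then the window s[t, t+ρ−1] covers G if and only if there exists an instance i ∈ inst(G) with t ≤ first(i) and last(i) ≤ t + ρ − 1. -/

import Mathlib

/-- A sequence event: a unique id, a label (from alphabet encoded as `ℕ`),
and an integer time stamp. -/
structure SeqEvent where
  id : ℕ
  lab : ℕ
  ts : ℤ
deriving DecidableEq

/-- An event sequence: a finite collection of sequence events with distinct ids,
whose time stamps are monotone in the ids. -/
structure EventSeq where
  events : Finset SeqEvent
  id_inj : ∀ e ∈ events, ∀ f ∈ events, e.id = f.id → e = f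
  ts_mono : ∀ e ∈ events, ∀ f ∈ events, e.id ≤ f.id → e.ts ≤ f.ts

/-- An episode: a finite set of episode events (identified by ids in `ℕ`) with labels,
a finite set of graph nodes, a map from events to nodes (surjectivity and the DAG
property are recorded in `Episode.WellFormed`), and weak and proper edges. -/
structure Episode where
  events : Finset ℕ
  lab : ℕ → ℕ
  nodes : Finset ℕ
  node : ℕ → ℕ
  weak : ℕ → ℕ → Prop
  proper : ℕ → ℕ → Prop

namespace Episode

/-- An edge of the episode graph (weak or proper). -/
def edge (G : Episode) (a b : ℕ) : Prop := G.weak a b ∨ G.proper a b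

/-- `G.Desc m n` : `n` is a descendant of `m`, i.e. there is a directed path from `m` to `n`. -/
def Desc (G : Episode) (m n : ℕ) : Prop := Relation.TransGen G.edge m n

/-- `G.PDesc m n` : `n` is a proper descendant of `m`, i.e. some directed path
from `m` to `n` contains a proper edge. -/
def PDesc (G : Episode) (m n : ℕ) : Prop :=
  ∃ a b, Relation.ReflTransGen G.edge m a ∧ G.proper a b ∧ Relation.ReflTransGen G.edge b n

/-- Well-formedness of an episode: events map into the nodes, every node carries an
event, edges run between nodes, the weak and proper edges are disjoint, and the
graph is acyclic (a DAG). -/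
structure WellFormed (G : Episode) : Prop where
  node_mem : ∀ e ∈ G.events, G.node e ∈ G.nodes
  node_surj : ∀ n ∈ G.nodes, ∃ e ∈ G.events, G.node e = n
  weak_mem : ∀ a b, G.weak a b → a ∈ G.nodes ∧ b ∈ G.nodes
  proper_mem : ∀ a b, G.proper a b → a ∈ G.nodes ∧ b ∈ G.nodes
  weak_proper_disjoint : ∀ a b, G.weak a b → G.proper a b → False
  acyclic : ∀ n, ¬ G.Desc n n

/-- The transitive closure of an episode: add an edge from every node to each of its
descendants, proper if the descendant is a proper descendant, weak otherwise. -/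
def tcl (G : Episode) : Episode :=
  { G with
    proper := fun a b => G.PDesc a b
    weak := fun a b => G.Desc a b ∧ ¬ G.PDesc a b }

/-- An episode is transitively closed if it coincides with its transitive closure. -/
def TransClosed (G : Episode) : Prop :=
  (∀ a b, G.proper a b ↔ G.PDesc a b) ∧
  (∀ a b, G.weak a b ↔ (G.Desc a b ∧ ¬ G.PDesc a b))

end Episode

/-- `m` is a coverage mapping of episode `G` into sequence `s`: an injective map from
the episode events into the sequence events preserving labels, mapping events of one
node to a common time stamp, and respecting weak and proper edges. -/
def IsCoverMap (s : EventSeq) (G : Episode) (m : ℕ → SeqEvent) : Prop :=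
  (∀ e ∈ G.events, m e ∈ s.events) ∧
  Set.InjOn m ↑G.events ∧
  (∀ e ∈ G.events, (m e).lab = G.lab e) ∧
  (∀ e ∈ G.events, ∀ f ∈ G.events, G.node e = G.node f → (m e).ts = (m f).ts) ∧
  (∀ e ∈ G.events, ∀ f ∈ G.events, G.Desc (G.node f) (G.node e) → (m f).ts ≤ (m e).ts) ∧
  (∀ e ∈ G.events, ∀ f ∈ G.events, G.PDesc (G.node f) (G.node e) → (m f).ts < (m e).ts)

/-- A sequence `s` covers an episode `G`. -/
def Covers (s : EventSeq) (G : Episode) : Prop := ∃ m, IsCoverMap s G m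

/-- `G ⪯ H` : every sequence covering `H` also covers `G`. -/
def Subepisode (G H : Episode) : Prop := ∀ s : EventSeq, Covers s H → Covers s G

/-- `G ∼ H` : `G ⪯ H` and `H ⪯ G`. -/
def EpisodeSimilar (G H : Episode) : Prop := Subepisode G H ∧ Subepisode H G

/-- The window `s[i, j]`: the subsequence of events with time stamps in `[i, j]`. -/
def EventSeq.window (s : EventSeq) (i j : ℤ) : EventSeq where
  events := s.events.filter (fun e => i ≤ e.ts ∧ e.ts ≤ j)
  id_inj := fun e he f hf h =>
    s.id_inj e (Finset.mem_filter.mp he).1 f (Finset.mem_filter.mp hf).1 h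
  ts_mono := fun e he f hf h =>
    s.ts_mono e (Finset.mem_filter.mp he).1 f (Finset.mem_filter.mp hf).1 h

/-- The support `fr(G; s)` with window size `ρ`: the number of integers `t` such that
the window `s[t, t + ρ - 1]` covers `G` (as an extended natural number). -/
noncomputable def support (ρ : ℤ) (s : EventSeq) (G : Episode) : ℕ∞ :=
  {t : ℤ | Covers (s.window t (t + ρ - 1)) G}.encard

/-- `first(i)` : the smallest time stamp in the range of the instance. -/
noncomputable def instFirst (G : Episode) (m : ℕ → SeqEvent) : ℤ :=
  sInf ((fun e => (m e).ts) '' ↑G.events)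

/-- `last(i)` : the largest time stamp in the range of the instance. -/
noncomputable def instLast (G : Episode) (m : ℕ → SeqEvent) : ℤ :=
  sSup ((fun e => (m e).ts) '' ↑G.events)

/-- `m` is an instance of `G` in `s` (with window size `ρ`): a coverage mapping of `G`
into `s` such that no used sequence event can be replaced by an unused one with the same
label, the same time stamp and a smaller id, and whose span is less than `ρ`. -/
def IsInstance (ρ : ℤ) (s : EventSeq) (G : Episode) (m : ℕ → SeqEvent) : Prop :=
  IsCoverMap s G m ∧
  (∀ e ∈ G.events, ∀ f ∈ s.events, (∀ e' ∈ G.events, m e' ≠ f) →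
      f.lab = (m e).lab → f.ts = (m e).ts → ¬ f.id < (m e).id) ∧
  instLast G m - instFirst G m ≤ ρ - 1

/-- the window `s[t, t + ρ - 1]` covers `G` if and only if there is an
instance `i ∈ inst(G)` with `t ≤ first(i)` and `last(i) ≤ t + ρ - 1`. -/
theorem window_covers_iff_instance (s : EventSeq) (G : Episode)
    (hG : G.WellFormed) (hne : G.events.Nonempty)
    (ρ : ℤ) (hρ : 1 ≤ ρ) (t : ℤ) :
    Covers (s.window t (t + ρ - 1)) G ↔
      ∃ m, IsInstance ρ s G m ∧ t ≤ instFirst G m ∧ instLast G m ≤ t + ρ - 1 := by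
  constructor
  · rintro ⟨m, hmem, hinj, hlab, hnode, hdesc, hpdesc⟩
    -- events of m lie in the window
    have hwin : ∀ e ∈ G.events, m e ∈ s.events ∧ t ≤ (m e).ts ∧ (m e).ts ≤ t + ρ - 1 := by
      intro e he
      have := hmem e he
      simp only [EventSeq.window, Finset.mem_filter] at this
      exact ⟨this.1, this.2.1, this.2.2⟩
    -- candidate maps
    set Q : (ℕ → SeqEvent) → Prop := fun m' =>
      (∀ e ∈ G.events, m' e ∈ s.events) ∧ Set.InjOn m' ↑G.events ∧
      (∀ e ∈ G.events, (m' e).lab = G.lab e) ∧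
      (∀ e ∈ G.events, (m' e).ts = (m e).ts) with hQ
    set S : Set ℕ := {n | ∃ m', Q m' ∧ ∑ e ∈ G.events, (m' e).id = n} with hS
    have hSne : S.Nonempty := by
      refine ⟨∑ e ∈ G.events, (m e).id, m, ⟨?_, hinj, hlab, fun e he => rfl⟩, rfl⟩
      intro e he; exact (hwin e he).1
    obtain ⟨m', hQm', hsum⟩ := Nat.sInf_mem hSne
    obtain ⟨hmem', hinj', hlab', hts'⟩ := hQm'
    -- m' is a cover map of G into s
    have hcov : IsCoverMap s G m' := by
      refine ⟨hmem', hinj', hlab', ?_, ?_, ?_⟩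
      · intro e he f hf h; rw [hts' e he, hts' f hf]; exact hnode e he f hf h
      · intro e he f hf h; rw [hts' e he, hts' f hf]; exact hdesc e he f hf h
      · intro e he f hf h; rw [hts' e he, hts' f hf]; exact hpdesc e he f hf h
    -- image of ts coincide
    have himg : ((fun e => (m' e).ts) '' ↑G.events) = ((fun e => (m e).ts) '' ↑G.events) := by
      apply Set.image_congr; intro e he; exact hts' e he
    obtain ⟨e₀, he₀⟩ := hne
    have hne' : ((fun e => (m e).ts) '' ↑G.events).Nonempty :=
      ⟨(m e₀).ts, e₀, he₀, rfl⟩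
    have hfirst : t ≤ instFirst G m' := by
      rw [instFirst, himg]
      apply le_csInf hne'
      rintro x ⟨e, he, rfl⟩; exact (hwin e he).2.1
    have hlast : instLast G m' ≤ t + ρ - 1 := by
      rw [instLast, himg]
      apply csSup_le hne'
      rintro x ⟨e, he, rfl⟩; exact (hwin e he).2.2
    refine ⟨m', ⟨hcov, ?_, by omega⟩, hfirst, hlast⟩
    -- minimality condition
    intro e he f hf hunused hflab hfts hfid
    set m'' : ℕ → SeqEvent := Function.update m' e f with hm''
    have hQm'' : Q m'' := by
      refine ⟨?_, ?_, ?_, ?_⟩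
      · intro x hx
        by_cases hxe : x = e
        · simpa [hm'', hxe] using hf
        · simpa [hm'', Function.update_of_ne hxe] using hmem' x hx
      · intro x hx y hy hxy
        by_cases hxe : x = e <;> by_cases hye : y = e
        · rw [hxe, hye]
        · exfalso
          rw [hxe] at hxy
          simp [hm'', Function.update_of_ne hye] at hxy
          exact hunused y hy hxy.symm
        · exfalso
          rw [hye] at hxy
          simp [hm'', Function.update_of_ne hxe] at hxy
          exact hunused x hx hxy
        · simp [hm'', Function.update_of_ne hxe, Function.update_of_ne hye] at hxy
          exact hinj' hx hy hxy
      · intro x hx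
        by_cases hxe : x = e
        · subst hxe; simp [hm'']; rw [hflab, hlab' x hx]
        · simp [hm'', Function.update_of_ne hxe]; exact hlab' x hx
      · intro x hx
        by_cases hxe : x = e
        · subst hxe; simp [hm'']; rw [hfts, hts' x hx]
        · simp [hm'', Function.update_of_ne hxe]; exact hts' x hx
    have hkey : (∑ x ∈ G.events, (m'' x).id) ∈ S := ⟨m'', hQm'', rfl⟩
    have hle := Nat.sInf_le hkey
    rw [← hsum] at hle
    have heq : (fun x => (m'' x).id) = Function.update (fun x => (m' x).id) e f.id := by
      funext x
      by_cases hxe : x = e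
      · subst hxe; simp [hm'']
      · simp [hm'', Function.update_of_ne hxe]
    have h1 : ∑ x ∈ G.events, (m'' x).id = f.id + ∑ x ∈ G.events.erase e, (m' x).id := by
      calc ∑ x ∈ G.events, (m'' x).id
          = ∑ x ∈ G.events, Function.update (fun x => (m' x).id) e f.id x := by
            exact Finset.sum_congr rfl (fun x _ => congrFun heq x)
        _ = f.id + ∑ x ∈ G.events \ {e}, (m' x).id := Finset.sum_update_of_mem he _ _
        _ = f.id + ∑ x ∈ G.events.erase e, (m' x).id := by rw [Finset.sdiff_singleton_eq_erase]
    have h2 : ∑ x ∈ G.events, (m' x).id = (m' e).id + ∑ x ∈ G.events.erase e, (m' x).id :=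
      (Finset.add_sum_erase _ _ he).symm
    omega
  · rintro ⟨m, ⟨⟨hmem, hinj, hlab, hnode, hdesc, hpdesc⟩, hmin, hspan⟩, hfirst, hlast⟩
    have hfin : ((fun e => (m e).ts) '' ↑G.events).Finite :=
      (G.events.finite_toSet).image _
    refine ⟨m, ?_, hinj, hlab, hnode, hdesc, hpdesc⟩
    intro e he
    have h1 : instFirst G m ≤ (m e).ts :=
      csInf_le hfin.bddBelow ⟨e, he, rfl⟩
    have h2 : (m e).ts ≤ instLast G m :=
      le_csSup hfin.bddAbove ⟨e, he, rfl⟩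
    simp only [EventSeq.window, Finset.mem_filter]
    exact ⟨hmem e he, by omega, by omega⟩
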